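/- Let Ω be an open convex subset of a finite-dimensional real inner product space, λ ∈ ℝ, and let fₙ : Ω → ℝ be a sequence of λ-concave functions converging pointwise on Ω to a function f : Ω → ℝ. Let xₙ ∈ Ω converge to x ∈ Ω, suppose each fₙ is Fréchet differentiable at xₙ and f is Fréchet differentiable at x. Then ‖∇f(x)‖ ≤ liminf_{n→∞} ‖∇fₙ(xₙ)‖. -/

import Mathlib

set_option maxHeartbeats 1000000

open scoped RealInnerProductSpace
open Filter Topology

section Aux
variable {E : Type*} [NormedAddCommGroup E] [InnerProductSpace ℝ E]

/-- Supporting hyperplane inequality for a concave function differentiable at a point. -/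
lemma aux_support {Ω : Set E} {h : E → ℝ} (hc : ConcaveOn ℝ Ω h) {h' : E →L[ℝ] ℝ} {x y : E}
    (hx : x ∈ Ω) (hy : y ∈ Ω) (hd : HasFDerivAt h h' x) :
    h y ≤ h x + h' (y - x) := by
  have hline : ∀ t : ℝ, HasDerivAt (fun t : ℝ => AffineMap.lineMap x y t) (y - x) t := by
    intro t
    have h1 : HasDerivAt (fun t : ℝ => t • (y - x) + x) ((1:ℝ) • (y - x)) t :=
      ((hasDerivAt_id t).smul_const (y - x)).add_const x
    have he : (fun t : ℝ => AffineMap.lineMap x y t) = fun t : ℝ => t • (y - x) + x := by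
      funext t
      simp [AffineMap.lineMap_apply_module]
      module
    rw [he]
    simpa using h1
  have hφc : ConvexOn ℝ ((AffineMap.lineMap x y : ℝ →ᵃ[ℝ] E) ⁻¹' Ω)
      ((-h) ∘ (AffineMap.lineMap x y : ℝ →ᵃ[ℝ] E)) := hc.neg.comp_affineMap _
  have h0 : (0:ℝ) ∈ (AffineMap.lineMap x y : ℝ →ᵃ[ℝ] E) ⁻¹' Ω := by
    simp [Set.mem_preimage, AffineMap.lineMap_apply_zero, hx]
  have h1 : (1:ℝ) ∈ (AffineMap.lineMap x y : ℝ →ᵃ[ℝ] E) ⁻¹' Ω := by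
    simp [Set.mem_preimage, AffineMap.lineMap_apply_one, hy]
  have hφd : HasDerivAt ((-h) ∘ (AffineMap.lineMap x y : ℝ →ᵃ[ℝ] E)) (-(h' (y - x))) 0 := by
    have hcomp : HasDerivAt (h ∘ (AffineMap.lineMap x y : ℝ →ᵃ[ℝ] E)) (h' (y - x)) 0 := by
      refine HasFDerivAt.comp_hasDerivAt 0 ?_ (hline 0)
      simpa [AffineMap.lineMap_apply_zero] using hd
    exact hcomp.neg
  have key := hφc.le_slope_of_hasDerivAt h0 h1 one_pos hφd
  have hs : slope ((-h) ∘ (AffineMap.lineMap x y : ℝ →ᵃ[ℝ] E)) 0 1 = -h y + h x := by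
    simp [slope_def_field, AffineMap.lineMap_apply_zero, AffineMap.lineMap_apply_one,
      Function.comp_def]
  rw [hs] at key
  linarith

/-- Supporting hyperplane inequality for a λ-concave function differentiable at a point. -/
lemma aux_support' {Ω : Set E} (lam : ℝ) {fn : E → ℝ}
    (hc : ConcaveOn ℝ Ω (fun y => fn y - lam / 2 * ‖y‖ ^ 2)) {gn xn : E}
    (hd : HasFDerivAt fn (innerSL ℝ gn) xn) (hxn : xn ∈ Ω) {y : E} (hy : y ∈ Ω) :
    fn y ≤ fn xn + ⟪gn, y - xn⟫ + lam / 2 * ‖y - xn‖ ^ 2 := by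
  have hd2 : HasFDerivAt (fun y => fn y - lam / 2 * ‖y‖ ^ 2)
      (innerSL ℝ gn - (lam / 2) • (2 • innerSL ℝ xn)) xn :=
    hd.sub (((hasStrictFDerivAt_norm_sq xn).hasFDerivAt).const_mul (lam / 2))
  have key := aux_support hc hxn hy hd2
  have happ : (innerSL ℝ gn - (lam / 2) • (2 • innerSL ℝ xn)) (y - xn)
      = ⟪gn, y - xn⟫ - lam * ⟪xn, y - xn⟫ := by
    simp [ContinuousLinearMap.sub_apply, ContinuousLinearMap.smul_apply, two_smul,
      smul_eq_mul]
    ring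
  rw [happ] at key
  have hexp : ‖y - xn‖ ^ 2 = ‖y‖ ^ 2 - 2 * ⟪y, xn⟫ + ‖xn‖ ^ 2 := norm_sub_sq_real y xn
  have hin : ⟪xn, y - xn⟫ = ⟪xn, y⟫ - ‖xn‖ ^ 2 := by
    rw [inner_sub_right, real_inner_self_eq_norm_sq]
  have hcomm : ⟪y, xn⟫ = ⟪xn, y⟫ := real_inner_comm xn y
  have hfin : fn xn + ⟪gn, y - xn⟫ + lam / 2 * ‖y - xn‖ ^ 2
      = (fn xn - lam / 2 * ‖xn‖ ^ 2 + (⟪gn, y - xn⟫ - lam * ⟪xn, y - xn⟫))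
        + lam / 2 * ‖y‖ ^ 2 := by
    rw [hexp, hin, hcomm]; ring
  linarith [key]

variable [FiniteDimensional ℝ E]

/-- Eventual lower bound at moving points for pointwise-converging concave functions. -/
lemma aux_lower {Ω : Set E} (hΩo : IsOpen Ω)
    (h : ℕ → E → ℝ) (H : E → ℝ)
    (hconc : ∀ n, ConcaveOn ℝ Ω (h n))
    (hpt : ∀ y ∈ Ω, Tendsto (fun n => h n y) atTop (nhds (H y)))
    (HC : ContinuousOn H Ω)
    {z : E} (hz : z ∈ Ω) {zs : ℕ → E} (hzs : Tendsto zs atTop (nhds z))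
    {ε : ℝ} (hε : 0 < ε) :
    ∀ᶠ n in atTop, H z - ε ≤ h n (zs n) := by
  have hcw : ContinuousWithinAt H Ω z := HC z hz
  have hio : {y | H z - ε / 2 < H y} ∈ 𝓝[Ω] z := by
    have : Set.Ioi (H z - ε / 2) ∈ nhds (H z) := Ioi_mem_nhds (by linarith)
    exact hcw this
  rw [mem_nhdsWithin] at hio
  obtain ⟨u, huo, hzu, hsub⟩ := hio
  set U : Set E := u ∩ Ω with hU
  have hUnhds : U ∈ 𝓝 z := Filter.inter_mem (huo.mem_nhds hzu) (hΩo.mem_nhds hz)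
  obtain ⟨b, hzb, hbU⟩ := exists_mem_interior_convexHull_affineBasis hUnhds
  have hrange : Set.range ⇑b ⊆ Ω := by
    refine (subset_convexHull ℝ _).trans (hbU.trans ?_)
    exact Set.inter_subset_right
  have hev1 : ∀ᶠ n in atTop, zs n ∈ interior (convexHull ℝ (Set.range ⇑b)) :=
    hzs.eventually_mem (isOpen_interior.mem_nhds hzb)
  have hev2 : ∀ᶠ n in atTop, ∀ i, H z - ε ≤ h n (b i) := by
    rw [eventually_all]
    intro i
    have hbi : b i ∈ Ω := hrange ⟨i, rfl⟩
    have hbiU : b i ∈ U := hbU ((subset_convexHull ℝ _) ⟨i, rfl⟩)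
    have hlt : H z - ε < H (b i) := by
      have := hsub ⟨hbiU.1, hbiU.2⟩
      simp only [Set.mem_setOf_eq] at this
      linarith
    exact ((hpt _ hbi).eventually (eventually_ge_nhds hlt)).mono fun n hn => hn
  filter_upwards [hev1, hev2] with n h1 h2
  obtain ⟨p, hp, hple⟩ := (hconc n).exists_le_of_mem_convexHull hrange (interior_subset h1)
  obtain ⟨i, rfl⟩ := hp
  exact (h2 i).trans hple

/-- Convergence at moving points for pointwise-converging concave functions. -/
lemma aux_tendsto {Ω : Set E} (hΩo : IsOpen Ω)
    (h : ℕ → E → ℝ) (H : E → ℝ)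
    (hconc : ∀ n, ConcaveOn ℝ Ω (h n))
    (hpt : ∀ y ∈ Ω, Tendsto (fun n => h n y) atTop (nhds (H y)))
    (HC : ContinuousOn H Ω)
    {z : E} (hz : z ∈ Ω) {zs : ℕ → E} (hzs : Tendsto zs atTop (nhds z))
    (hzsΩ : ∀ n, zs n ∈ Ω) :
    Tendsto (fun n => h n (zs n)) atTop (nhds (H z)) := by
  rw [Metric.tendsto_atTop]
  intro ε hε
  rw [← eventually_atTop]
  have hε4 : 0 < ε / 4 := by linarith
  have hlow := aux_lower hΩo h H hconc hpt HC hz hzs hε4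
  set ws : ℕ → E := fun n => (2:ℝ) • z - zs n with hws
  have hwlim : Tendsto ws atTop (nhds z) := by
    have : Tendsto (fun n => (2:ℝ) • z - zs n) atTop (nhds ((2:ℝ) • z - z)) :=
      tendsto_const_nhds.sub hzs
    simpa [hws, two_smul] using this
  have hwlow := aux_lower hΩo h H hconc hpt HC hz hwlim hε4
  have hwΩ : ∀ᶠ n in atTop, ws n ∈ Ω := hwlim.eventually_mem (hΩo.mem_nhds hz)
  have hzconv : ∀ᶠ n in atTop, |h n z - H z| < ε / 4 := by
    have := (hpt z hz)
    rw [Metric.tendsto_atTop] at this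
    obtain ⟨N, hN⟩ := this (ε/4) hε4
    exact eventually_atTop.2 ⟨N, fun n hn => by simpa [Real.dist_eq] using hN n hn⟩
  filter_upwards [hlow, hwlow, hwΩ, hzconv] with n h1 h2 h3 h4
  have hmid : (1/2 : ℝ) * h n (zs n) + (1/2 : ℝ) * h n (ws n) ≤ h n z := by
    have := (hconc n).2 (hzsΩ n) h3 (by norm_num : (0:ℝ) ≤ 1/2) (by norm_num : (0:ℝ) ≤ 1/2)
      (by norm_num)
    have heq : (1/2 : ℝ) • zs n + (1/2 : ℝ) • ws n = z := by
      rw [hws]; module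
    rw [heq] at this
    simpa [smul_eq_mul] using this
  rw [Real.dist_eq, abs_lt]
  constructor
  · linarith [abs_lt.1 h4]
  · linarith [abs_lt.1 h4]

end Aux

/-- Lower semicontinuity of gradient norms under pointwise convergence of λ-concave
functions (linear model of Lemma 1.7). -/
theorem norm_gradient_le_liminf
    {E : Type*} [NormedAddCommGroup E] [InnerProductSpace ℝ E] [FiniteDimensional ℝ E]
    (Ω : Set E) (hΩo : IsOpen Ω) (hΩc : Convex ℝ Ω) (lam : ℝ)
    (f : ℕ → E → ℝ) (flim : E → ℝ)
    (hconc : ∀ n, ConcaveOn ℝ Ω (fun y => f n y - lam / 2 * ‖y‖ ^ 2))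
    (hptws : ∀ y ∈ Ω, Filter.Tendsto (fun n => f n y) Filter.atTop (nhds (flim y)))
    (x : ℕ → E) (hx : ∀ n, x n ∈ Ω) (x₀ : E) (hx₀ : x₀ ∈ Ω)
    (hxlim : Filter.Tendsto x Filter.atTop (nhds x₀))
    (g : ℕ → E) (hg : ∀ n, HasFDerivAt (f n) (innerSL ℝ (g n)) (x n))
    (g₀ : E) (hg₀ : HasFDerivAt flim (innerSL ℝ g₀) x₀) :
    ‖g₀‖ ≤ Filter.liminf (fun n => ‖g n‖) Filter.atTop := by
  classical
  set h : ℕ → E → ℝ := fun n y => f n y - lam / 2 * ‖y‖ ^ 2 with hh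
  set H : E → ℝ := fun y => flim y - lam / 2 * ‖y‖ ^ 2 with hH
  have hconc' : ∀ n, ConcaveOn ℝ Ω (h n) := hconc
  have hpt : ∀ y ∈ Ω, Tendsto (fun n => h n y) atTop (𝓝 (H y)) :=
    fun y hy => (hptws y hy).sub_const _
  have HCc : ConcaveOn ℝ Ω H := by
    refine ⟨hΩc, fun a ha b hb p q hp hq hpq => ?_⟩
    have hle : ∀ n, p • h n a + q • h n b ≤ h n (p • a + q • b) :=
      fun n => (hconc' n).2 ha hb hp hq hpq
    refine le_of_tendsto_of_tendsto' ?_ (hpt _ (hΩc ha hb hp hq hpq)) hle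
    exact ((hpt a ha).const_smul p).add ((hpt b hb).const_smul q)
  have HC : ContinuousOn H Ω := HCc.continuousOn hΩo
  have hsupp : ∀ n, ∀ y ∈ Ω, f n y ≤ f n (x n) + ⟪g n, y - x n⟫ + lam / 2 * ‖y - x n‖ ^ 2 :=
    fun n y hy => aux_support' lam (hconc n) (hg n) (hx n) hy
  -- convergence of `f n (x n)` to `flim x₀`
  have hfx : Tendsto (fun n => f n (x n)) atTop (𝓝 (flim x₀)) := by
    have h1 : Tendsto (fun n => h n (x n)) atTop (𝓝 (H x₀)) :=
      aux_tendsto hΩo h H hconc' hpt HC hx₀ hxlim hx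
    have h2 : Tendsto (fun n => lam / 2 * ‖x n‖ ^ 2) atTop (𝓝 (lam / 2 * ‖x₀‖ ^ 2)) :=
      ((hxlim.norm).pow 2).const_mul _
    have h3 := h1.add h2
    have h4 : (fun n => h n (x n) + lam / 2 * ‖x n‖ ^ 2) = fun n => f n (x n) := by
      funext n; simp [hh]
    have h5 : H x₀ + lam / 2 * ‖x₀‖ ^ 2 = flim x₀ := by simp [hH]
    rwa [h4, h5] at h3
  -- eventual boundedness of the gradients
  have hbound : ∃ C : ℝ, 0 ≤ C ∧ ∀ᶠ n in atTop, ‖g n‖ ≤ C := by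
    obtain ⟨b, hzb, hbΩ⟩ := exists_mem_interior_convexHull_affineBasis (hΩo.mem_nhds hx₀)
    have hrange : Set.range ⇑b ⊆ Ω := (subset_convexHull ℝ _).trans hbΩ
    obtain ⟨δ, hδ, hball⟩ := Metric.mem_nhds_iff.1 (isOpen_interior.mem_nhds hzb)
    obtain ⟨r, hr⟩ : ∃ r : ℝ, r = δ / 3 := ⟨_, rfl⟩
    have hr0 : 0 < r := by rw [hr]; linarith
    obtain ⟨m, hm⟩ := Finite.exists_le fun i => -(H (b i) - 1)
    obtain ⟨R, hR⟩ : ∃ R : ℝ, R = ‖x₀‖ + δ := ⟨_, rfl⟩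
    obtain ⟨C, hC⟩ : ∃ C : ℝ, C = (flim x₀ + 1 + m + |lam| / 2 * (r ^ 2 + R ^ 2)) / r := ⟨_, rfl⟩
    refine ⟨max C 0, le_max_right _ _, ?_⟩
    have hevb : ∀ᶠ n in atTop, ∀ i, H (b i) - 1 ≤ h n (b i) := by
      rw [eventually_all]
      intro i
      exact (hpt _ (hrange ⟨i, rfl⟩)).eventually
        (eventually_ge_nhds (by linarith [sub_lt_self (H (b i)) one_pos]))
    have hevx : ∀ᶠ n in atTop, ‖x n - x₀‖ < r :=
      (hxlim.eventually_mem (Metric.ball_mem_nhds x₀ hr0)).mono fun n hn => by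
        simpa [Metric.mem_ball, dist_eq_norm] using hn
    have hevf : ∀ᶠ n in atTop, f n (x n) ≤ flim x₀ + 1 :=
      hfx.eventually (eventually_le_nhds (lt_add_one _))
    filter_upwards [hevb, hevx, hevf] with n h1 h2 h3
    obtain ⟨u, hu⟩ : ∃ u : E, u = if g n = 0 then 0 else ‖g n‖⁻¹ • g n := ⟨_, rfl⟩
    have hun : ‖u‖ ≤ 1 := by
      rw [hu]
      split_ifs with hgn
      · simp
      · rw [norm_smul, norm_inv, norm_norm, inv_mul_cancel₀ (norm_ne_zero_iff.2 hgn)]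
    have hinner : ⟪g n, u⟫ = ‖g n‖ := by
      rw [hu]
      split_ifs with hgn
      · simp [hgn]
      · rw [real_inner_smul_right, real_inner_self_eq_norm_sq, sq, ← mul_assoc,
          inv_mul_cancel₀ (norm_ne_zero_iff.2 hgn), one_mul]
    obtain ⟨y, hy⟩ : ∃ y : E, y = x n - r • u := ⟨_, rfl⟩
    have hyb : y ∈ Metric.ball x₀ δ := by
      rw [Metric.mem_ball, dist_eq_norm]
      have he : y - x₀ = (x n - x₀) - r • u := by rw [hy]; abel
      rw [he]
      calc ‖(x n - x₀) - r • u‖ ≤ ‖x n - x₀‖ + ‖r • u‖ := norm_sub_le _ _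
        _ ≤ ‖x n - x₀‖ + r := by
            rw [norm_smul, Real.norm_eq_abs, abs_of_pos hr0]
            nlinarith
        _ < δ := by rw [hr] at h2 ⊢; linarith
    have hyK : y ∈ convexHull ℝ (Set.range ⇑b) := interior_subset (hball hyb)
    have hyΩ : y ∈ Ω := hbΩ hyK
    -- lower bound on `f n y`
    obtain ⟨p, hp, hple⟩ := (hconc' n).exists_le_of_mem_convexHull hrange hyK
    obtain ⟨i, rfl⟩ := hp
    have hly : -m ≤ h n y := by
      have := hm i
      have := h1 i
      linarith [hple]
    have hyR : ‖y‖ ≤ R := by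
      have : ‖y - x₀‖ < δ := by
        rw [← dist_eq_norm]; exact hyb
      calc ‖y‖ = ‖x₀ + (y - x₀)‖ := by congr 1; abel
        _ ≤ ‖x₀‖ + ‖y - x₀‖ := norm_add_le _ _
        _ ≤ R := by rw [hR]; linarith
    have hfy : -m - |lam| / 2 * R ^ 2 ≤ f n y := by
      have h6 : -m ≤ f n y - lam / 2 * ‖y‖ ^ 2 := hly
      have h7 : ‖y‖ ^ 2 ≤ R ^ 2 := by
        have := norm_nonneg y
        nlinarith
      have h8 : |lam| * ‖y‖ ^ 2 ≤ |lam| * R ^ 2 := mul_le_mul_of_nonneg_left h7 (abs_nonneg lam)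
      have h9 : -|lam| * ‖y‖ ^ 2 ≤ lam * ‖y‖ ^ 2 :=
        mul_le_mul_of_nonneg_right (neg_abs_le lam) (sq_nonneg ‖y‖)
      linarith
    -- support inequality at `y`
    have hs := hsupp n y hyΩ
    have hyd : y - x n = -(r • u) := by rw [hy]; abel
    have hgy : ⟪g n, y - x n⟫ = -(r * ‖g n‖) := by
      rw [hyd, inner_neg_right, real_inner_smul_right, hinner]
    have hnyd : ‖y - x n‖ ^ 2 ≤ r ^ 2 := by
      rw [hyd, norm_neg, norm_smul, Real.norm_eq_abs, abs_of_pos hr0]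
      have h8 : ‖u‖ ^ 2 ≤ 1 := by nlinarith [norm_nonneg u]
      calc (r * ‖u‖) ^ 2 = r ^ 2 * ‖u‖ ^ 2 := by ring
        _ ≤ r ^ 2 * 1 := mul_le_mul_of_nonneg_left h8 (sq_nonneg r)
        _ = r ^ 2 := by ring
    have hquad : lam / 2 * ‖y - x n‖ ^ 2 ≤ |lam| / 2 * r ^ 2 := by
      have h9 : lam * ‖y - x n‖ ^ 2 ≤ |lam| * ‖y - x n‖ ^ 2 :=
        mul_le_mul_of_nonneg_right (le_abs_self lam) (sq_nonneg _)
      have h10 : |lam| * ‖y - x n‖ ^ 2 ≤ |lam| * r ^ 2 :=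
        mul_le_mul_of_nonneg_left hnyd (abs_nonneg lam)
      linarith
    have hrg : r * ‖g n‖ ≤ flim x₀ + 1 + m + |lam| / 2 * (r ^ 2 + R ^ 2) := by
      rw [hgy] at hs
      linarith [hs, hquad, hfy, h3]
    have : ‖g n‖ ≤ C := by
      rw [hC, le_div_iff₀ hr0]
      linarith [hrg]
    exact this.trans (le_max_left _ _)
  obtain ⟨C, hC0, hCev⟩ := hbound
  have hbdd : IsBoundedUnder (· ≤ ·) atTop fun n => ‖g n‖ := ⟨C, by simpa using hCev⟩
  have hcob : IsCoboundedUnder (· ≥ ·) atTop fun n => ‖g n‖ := hbdd.isCoboundedUnder_ge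
  refine le_of_forall_pos_le_add fun ε hε => ?_
  have hev : ∀ᶠ n in atTop, ‖g₀‖ - ε ≤ ‖g n‖ := by
    by_cases hg0 : ‖g₀‖ ≤ ε
    · exact Eventually.of_forall fun n => by linarith [norm_nonneg (g n)]
    push_neg at hg0
    have hg₀ne : g₀ ≠ 0 := by
      intro hcon
      rw [hcon, norm_zero] at hg0
      linarith
    obtain ⟨v, hv⟩ : ∃ v : E, v = ‖g₀‖⁻¹ • g₀ := ⟨_, rfl⟩
    have hvn : ‖v‖ = 1 := by
      rw [hv, norm_smul, norm_inv, norm_norm, inv_mul_cancel₀ (norm_ne_zero_iff.2 hg₀ne)]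
    have hvinner : ⟪g₀, v⟫ = ‖g₀‖ := by
      rw [hv, real_inner_smul_right, real_inner_self_eq_norm_sq, sq, ← mul_assoc,
        inv_mul_cancel₀ (norm_ne_zero_iff.2 hg₀ne), one_mul]
    have hlo := hg₀.isLittleO.def (show (0:ℝ) < ε/8 by linarith)
    have hmem : {x' | ‖flim x' - flim x₀ - (innerSL ℝ g₀) (x' - x₀)‖ ≤ ε/8 * ‖x' - x₀‖} ∩ Ω
        ∈ 𝓝 x₀ := Filter.inter_mem hlo (hΩo.mem_nhds hx₀)
    obtain ⟨ρ, hρ0, hρ⟩ := Metric.mem_nhds_iff.1 hmem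
    obtain ⟨t, ht⟩ : ∃ t : ℝ, t = min (ρ/2) (ε/(16*(|lam|+1))) := ⟨_, rfl⟩
    have habs : (0:ℝ) < |lam| + 1 := by positivity
    have ht0 : 0 < t := by
      rw [ht]
      exact lt_min (by linarith) (div_pos (by linarith) (by positivity))
    obtain ⟨y, hy⟩ : ∃ y : E, y = x₀ + t • v := ⟨_, rfl⟩
    have hyx₀ : y - x₀ = t • v := by rw [hy]; abel
    have hynorm : ‖y - x₀‖ = t := by
      rw [hyx₀, norm_smul, Real.norm_eq_abs, abs_of_pos ht0, hvn, mul_one]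
    have hyball : y ∈ Metric.ball x₀ ρ := by
      rw [Metric.mem_ball, dist_eq_norm, hynorm, ht]
      have := min_le_left (ρ/2) (ε/(16*(|lam|+1)))
      have h2 := min_le_right (ρ/2) (ε/(16*(|lam|+1)))
      exact lt_of_le_of_lt (min_le_left _ _) (by linarith)
    have hyS := hρ hyball
    have hyΩ : y ∈ Ω := hyS.2
    have hflim2 : t * ‖g₀‖ - ε/8 * t ≤ flim y - flim x₀ := by
      have h1 : (innerSL ℝ g₀) (y - x₀) = t * ‖g₀‖ := by
        have : (innerSL ℝ g₀) (y - x₀) = ⟪g₀, y - x₀⟫ := rfl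
        rw [this, hyx₀, real_inner_smul_right, hvinner]
      have h2 : ‖flim y - flim x₀ - t * ‖g₀‖‖ ≤ ε/8 * t := by
        have := hyS.1
        simp only [Set.mem_setOf_eq, hynorm, h1] at this
        exact this
      rw [Real.norm_eq_abs] at h2
      have := abs_le.1 h2
      linarith [this.1]
    have hεt : 0 < ε * t := mul_pos hε ht0
    have e1 : ∀ᶠ n in atTop, flim y - ε*t/8 ≤ f n y :=
      (hptws y hyΩ).eventually (eventually_ge_nhds (by linarith))
    have e2 : ∀ᶠ n in atTop, f n (x n) ≤ flim x₀ + ε*t/8 :=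
      hfx.eventually (eventually_le_nhds (by linarith))
    have hρ'0 : 0 < min t (ε*t/(8*(C+1))) :=
      lt_min ht0 (div_pos (mul_pos hε ht0) (by linarith))
    have e3 : ∀ᶠ n in atTop, ‖x n - x₀‖ ≤ min t (ε*t/(8*(C+1))) :=
      (hxlim.eventually_mem (Metric.closedBall_mem_nhds x₀ hρ'0)).mono fun n hn => by
        simpa [Metric.mem_closedBall, dist_eq_norm] using hn
    filter_upwards [e1, e2, e3, hCev] with n h1 h2 h3 h4
    have hs := hsupp n y hyΩ
    have hsplit : ⟪g n, y - x n⟫ = t * ⟪g n, v⟫ + ⟪g n, x₀ - x n⟫ := by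
      have he : y - x n = t • v + (x₀ - x n) := by rw [hy]; abel
      rw [he, inner_add_right, real_inner_smul_right]
    have hb1 : ⟪g n, x₀ - x n⟫ ≤ ε*t/8 := by
      have hi := real_inner_le_norm (g n) (x₀ - x n)
      have h5 : ‖x₀ - x n‖ ≤ ε*t/(8*(C+1)) := by
        rw [norm_sub_rev]
        exact h3.trans (min_le_right _ _)
      have h6 : ⟪g n, x₀ - x n⟫ ≤ C * (ε*t/(8*(C+1))) := by
        calc ⟪g n, x₀ - x n⟫ ≤ ‖g n‖ * ‖x₀ - x n‖ := hi
          _ ≤ C * (ε*t/(8*(C+1))) := by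
              apply mul_le_mul h4 h5 (norm_nonneg _) hC0
      have h7 : C * (ε*t/(8*(C+1))) ≤ ε*t/8 := by
        have he : C * (ε*t/(8*(C+1))) = C*(ε*t) / (8*(C+1)) := by ring
        rw [he, div_le_div_iff₀ (by linarith) (by norm_num)]
        nlinarith [hεt, hC0]
      linarith
    have hb2 : lam / 2 * ‖y - x n‖ ^ 2 ≤ ε*t/8 := by
      have h5 : ‖y - x n‖ ≤ 2*t := by
        calc ‖y - x n‖ = ‖(y - x₀) + (x₀ - x n)‖ := by congr 1; abel
          _ ≤ ‖y - x₀‖ + ‖x₀ - x n‖ := norm_add_le _ _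
          _ ≤ t + t := by
              rw [hynorm, norm_sub_rev]
              have := h3.trans (min_le_left _ _)
              linarith
          _ = 2*t := by ring
      have h6 : ‖y - x n‖ ^ 2 ≤ 4*t^2 := by nlinarith [norm_nonneg (y - x n)]
      have h7 : t ≤ ε/(16*(|lam|+1)) := by rw [ht]; exact min_le_right _ _
      have h8 : |lam| * t ≤ ε/16 := by
        have h7' : t * (16*(|lam|+1)) ≤ ε := (le_div_iff₀ (by positivity)).1 h7
        linarith
      have h9 : lam * ‖y - x n‖ ^ 2 ≤ |lam| * ‖y - x n‖ ^ 2 :=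
        mul_le_mul_of_nonneg_right (le_abs_self lam) (sq_nonneg _)
      have h10 : |lam| * ‖y - x n‖ ^ 2 ≤ |lam| * (4*t^2) :=
        mul_le_mul_of_nonneg_left h6 (abs_nonneg lam)
      have h11 : |lam| * t * t ≤ ε/16 * t := mul_le_mul_of_nonneg_right h8 ht0.le
      nlinarith
    have hfinal : t * (‖g₀‖ - ε) ≤ t * ⟪g n, v⟫ := by
      rw [hsplit] at hs
      linarith [hs, h1, h2, hb1, hb2, hflim2]
    have hvle : ⟪g n, v⟫ ≤ ‖g n‖ := by
      have := real_inner_le_norm (g n) v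
      rwa [hvn, mul_one] at this
    have : ‖g₀‖ - ε ≤ ⟪g n, v⟫ := le_of_mul_le_mul_left hfinal ht0
    linarith
  have := Filter.le_liminf_of_le hcob hev
  linarith
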